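/- arXiv:1706.09146 — 2 statements merged into one kernel-verified Lean document; each statement's English description precedes it below -/
import Mathlib

section
/- Let α be a primitive element of GF(2^s) satisfying an irreducible polynomial of degree s over GF(2), and for 0 ≤ j ≤ s let M_j ⊆ GF(2^s) be the GF(2)-span of {1, α, ..., α^{j−1}}. If j divides s and h_1 = α^{t_1·j}, h_2 = α^{t_2·j} with 0 ≤ t_1 < t_2 ≤ s/j − 1, then h_1·M_j ∩ h_2·M_j = {0}. -/
lemma zmod2_smul_mul {F : Type*} [Field F] [Module (ZMod 2) F]
    (a : F) (c : ZMod 2) (x : F) : a * (c • x) = c • (a * x) := by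
  fin_cases c
  · show a * ((0 : ZMod 2) • x) = (0 : ZMod 2) • (a * x)
    simp
  · show a * ((1 : ZMod 2) • x) = (1 : ZMod 2) • (a * x)
    simp

/-- Multiplication by `a` as a `ZMod 2`-linear map. -/
def mulL {F : Type*} [Field F] [Module (ZMod 2) F] (a : F) : F →ₗ[ZMod 2] F where
  toFun := fun m => a * m
  map_add' := mul_add a
  map_smul' := fun c x => zmod2_smul_mul a c x

/-- With `α` of degree `s` over GF(2) (the powers `α^0,...,α^{s-1}` are linearly
independent over GF(2)), `M_j` the GF(2)-span of `{1, α, ..., α^{j−1}}`, `j ∣ s`, and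
labels `h₁ = α^{t₁·j}`, `h₂ = α^{t₂·j}` with `t₁ < t₂ ≤ s/j − 1`, we have
`h₁·M_j ∩ h₂·M_j = {0}`. -/
theorem stmt7 {s j : ℕ} {F : Type*} [Field F] [Module (ZMod 2) F] (α : F)
    (hα : LinearIndependent (ZMod 2) fun i : Fin s => α ^ (i : ℕ))
    (hjs : j ∣ s) (t₁ t₂ : ℕ) (h12 : t₁ < t₂) (h2 : t₂ ≤ s / j - 1) :
    ((fun m => α ^ (t₁ * j) * m) ''
        (Submodule.span (ZMod 2) (Set.range fun i : Fin j => α ^ (i : ℕ)) : Set F)) ∩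
      ((fun m => α ^ (t₂ * j) * m) ''
        (Submodule.span (ZMod 2) (Set.range fun i : Fin j => α ^ (i : ℕ)) : Set F)) =
      {0} := by
  rcases Nat.eq_zero_or_pos j with hj | hj
  · subst hj; omega
  -- bound: for t ≤ s/j - 1 and i < j, t*j + i < s
  have hbound : ∀ t, t ≤ s / j - 1 → ∀ i : Fin j, t * j + (i : ℕ) < s := by
    intro t ht i
    have hij : (i : ℕ) < j := i.2
    have hdiv : s / j * j = s := Nat.div_mul_cancel hjs
    have h1 : 1 ≤ s / j := by
      rcases Nat.eq_zero_or_pos (s / j) with h | h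
      · omega
      · omega
    have : (t + 1) * j ≤ s / j * j := Nat.mul_le_mul_right j (by omega)
    calc t * j + (i : ℕ) < t * j + j := by omega
      _ = (t + 1) * j := by ring
      _ ≤ s := by omega
  set v : Fin s → F := fun i => α ^ (i : ℕ) with hv
  have ht1 : t₁ ≤ s / j - 1 := le_of_lt (lt_of_lt_of_le h12 h2)
  -- embeddings
  set e₁ : Fin j → Fin s := fun i => ⟨t₁ * j + i, hbound t₁ ht1 i⟩ with he₁
  set e₂ : Fin j → Fin s := fun i => ⟨t₂ * j + i, hbound t₂ h2 i⟩ with he₂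
  -- image of span is span of image
  have himg : ∀ (t : ℕ) (e : Fin j → Fin s), (∀ i, (e i : ℕ) = t * j + i) →
      ((fun m => α ^ (t * j) * m) ''
        (Submodule.span (ZMod 2) (Set.range fun i : Fin j => α ^ (i : ℕ)) : Set F)) =
      (Submodule.span (ZMod 2) (v '' Set.range e) : Set F) := by
    intro t e he
    have h1 : ((fun m => α ^ (t * j) * m) ''
        (Submodule.span (ZMod 2) (Set.range fun i : Fin j => α ^ (i : ℕ)) : Set F)) =
        (Submodule.map (mulL (α ^ (t * j)))
          (Submodule.span (ZMod 2) (Set.range fun i : Fin j => α ^ (i : ℕ))) : Set F) := rfl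
    have hre : (⇑(mulL (α ^ (t * j))) '' (Set.range fun i : Fin j => α ^ (i : ℕ)))
        = v '' Set.range e := by
      rw [← Set.range_comp, ← Set.range_comp]
      apply congrArg Set.range
      funext i
      show α ^ (t * j) * α ^ (i : ℕ) = α ^ ((e i : ℕ))
      rw [he i, pow_add]
    rw [h1, Submodule.map_span, hre]
  rw [himg t₁ e₁ (fun i => rfl), himg t₂ e₂ (fun i => rfl)]
  -- disjoint index sets
  have hdisj : Disjoint (Set.range e₁) (Set.range e₂) := by
    rw [Set.disjoint_iff_forall_ne]
    rintro _ ⟨i, rfl⟩ _ ⟨i', rfl⟩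
    intro h
    have hval : t₁ * j + (i : ℕ) = t₂ * j + (i' : ℕ) := congrArg Fin.val h
    have hij : (i : ℕ) < j := i.2
    have h1j : t₁ * j + j ≤ t₂ * j := by
      have h' : (t₁ + 1) * j ≤ t₂ * j := Nat.mul_le_mul_right j (by omega)
      rw [Nat.succ_mul] at h'
      exact h'
    omega
  have hd : Disjoint (Submodule.span (ZMod 2) (v '' Set.range e₁))
      (Submodule.span (ZMod 2) (v '' Set.range e₂)) :=
    hα.disjoint_span_image hdisj
  rw [← Submodule.coe_inf, disjoint_iff.mp hd, Submodule.bot_coe]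
end

section
/- The capacity of the q-ary multi-bit channel with q = 2^s and partial-erasure probabilities ε_0, ε_1, ..., ε_s (summing to 1) is 1 − ∑_{j=1}^{s} j·ε_j/s, measured in q-ary symbols per channel use, and it is achieved by the uniform input distribution. -/
/-- The QMBC transition kernel: on input `x ∈ {0,...,2^s−1}`, with probability `ε j`
the output is the partial-erasure set `M_x^j`, encoded as the pair `(j, ⌊x/2^j⌋·2^j)`
consisting of the erasure type and the smallest element of the set. -/
noncomputable def qmbcW (s : ℕ) (ε : Fin (s + 1) → ℝ)
    (x : Fin (2 ^ s)) (y : Fin (s + 1) × Fin (2 ^ s)) : ℝ :=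
  if (y.2 : ℕ) = (x : ℕ) / 2 ^ (y.1 : ℕ) * 2 ^ (y.1 : ℕ) then ε y.1 else 0

/-- Mutual information (in bits) between the input, distributed according to `p`, and
the output of the QMBC. -/
noncomputable def qmbcI (s : ℕ) (ε : Fin (s + 1) → ℝ) (p : Fin (2 ^ s) → ℝ) : ℝ :=
  ∑ x, ∑ y, p x * qmbcW s ε x y *
    Real.logb 2 (qmbcW s ε x y / ∑ x', p x' * qmbcW s ε x' y)

open Finset Real

/-- block probability -/
noncomputable def Pb (s j : ℕ) (p : Fin (2^s) → ℝ) (k : ℕ) : ℝ :=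
  ∑ x : Fin (2^s), if (x:ℕ)/2^j = k then p x else 0

lemma div_pow_lt {s j : ℕ} (hj : j ≤ s) (x : Fin (2^s)) : (x:ℕ)/2^j < 2^(s-j) := by
  apply Nat.div_lt_of_lt_mul
  calc (x:ℕ) < 2^s := x.2
    _ = 2^j * 2^(s-j) := by rw [← pow_add]; congr 1; omega

lemma Pb_nonneg {s j : ℕ} {p : Fin (2^s) → ℝ} (hp : ∀ x, 0 ≤ p x) (k : ℕ) :
    0 ≤ Pb s j p k := by
  apply Finset.sum_nonneg; intro x _; split <;> simp [hp x]

lemma Pb_sum {s j : ℕ} (hj : j ≤ s) (p : Fin (2^s) → ℝ) :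
    ∑ k ∈ Finset.range (2^(s-j)), Pb s j p k = ∑ x, p x := by
  unfold Pb
  rw [Finset.sum_comm]
  refine Finset.sum_congr rfl fun x _ => ?_
  rw [Finset.sum_ite_eq]
  simp [Finset.mem_range, div_pow_lt hj x]

lemma fiber_card {s j : ℕ} (hj : j ≤ s) {k : ℕ} (hk : k < 2^(s-j)) :
    (Finset.univ.filter (fun x : Fin (2^s) => (x:ℕ)/2^j = k)).card = 2^j := by
  have h2j : 0 < 2^j := Nat.pow_pos (by norm_num)
  have hb : ∀ r : ℕ, r < 2^j → k * 2^j + r < 2^s := by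
    intro r hr
    calc k * 2^j + r < (k+1) * 2^j := by nlinarith
      _ ≤ 2^(s-j) * 2^j := Nat.mul_le_mul_right _ hk
      _ = 2^s := by rw [← pow_add]; congr 1; omega
  have : (Finset.univ.filter (fun x : Fin (2^s) => (x:ℕ)/2^j = k)).card
      = (Finset.univ : Finset (Fin (2^j))).card := by
    refine Finset.card_bij' (fun x _ => (⟨(x:ℕ) % 2^j, Nat.mod_lt _ h2j⟩ : Fin (2^j)))
      (fun r _ => (⟨k * 2^j + (r:ℕ), hb _ r.2⟩ : Fin (2^s))) ?_ ?_ ?_ ?_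
    · intro a _; exact Finset.mem_univ _
    · intro r _
      simp only [Finset.mem_filter, Finset.mem_univ, true_and]
      show (k * 2^j + (r:ℕ)) / 2^j = k
      rw [Nat.add_comm, Nat.add_mul_div_right _ _ h2j, Nat.div_eq_of_lt r.2, Nat.zero_add]
    · intro a ha
      simp only [Finset.mem_filter, Finset.mem_univ, true_and] at ha
      apply Fin.ext
      show k * 2^j + (a:ℕ) % 2^j = (a:ℕ)
      conv_rhs => rw [← Nat.div_add_mod (a:ℕ) (2^j)]
      rw [ha, Nat.mul_comm]
    · intro r _
      apply Fin.ext
      show (k * 2^j + (r:ℕ)) % 2^j = (r:ℕ)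
      rw [Nat.add_comm, Nat.add_mul_mod_self_right, Nat.mod_eq_of_lt r.2]
  simpa using this

lemma fiber_sum {s j : ℕ} (hj : j ≤ s) (p : Fin (2^s) → ℝ) (g : ℕ → ℝ) :
    ∑ x : Fin (2^s), p x * g ((x:ℕ)/2^j)
      = ∑ k ∈ Finset.range (2^(s-j)), Pb s j p k * g k := by
  have hk : ∀ k, Pb s j p k * g k
      = ∑ x : Fin (2^s), (if (x:ℕ)/2^j = k then p x * g k else 0) := by
    intro k
    rw [Pb, Finset.sum_mul]
    exact Finset.sum_congr rfl fun x _ => by split <;> simp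
  rw [Finset.sum_congr rfl (fun k _ => hk k), Finset.sum_comm]
  refine Finset.sum_congr rfl fun x _ => ?_
  rw [Finset.sum_ite_eq]
  simp [Finset.mem_range, div_pow_lt hj x]

lemma entropy_le {ι : Type*} (T : Finset ι) (P : ι → ℝ)
    (h0 : ∀ i ∈ T, 0 ≤ P i) (h1 : ∑ i ∈ T, P i = 1) :
    ∑ i ∈ T, P i * Real.logb 2 (1 / P i) ≤ Real.logb 2 T.card := by
  have hT : T.Nonempty := by
    by_contra h
    rw [Finset.not_nonempty_iff_eq_empty.mp h] at h1
    simp at h1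
  have hN : (0:ℝ) < T.card := by exact_mod_cast Finset.card_pos.mpr hT
  have hlog2 : (0:ℝ) < Real.log 2 := Real.log_pos (by norm_num)
  have key : ∀ i ∈ T, P i * Real.logb 2 (1/P i) - P i * Real.logb 2 T.card
      ≤ (1/T.card - P i) / Real.log 2 := by
    intro i hi
    rcases eq_or_lt_of_le (h0 i hi) with h | hP
    · rw [← h]; simp; positivity
    · rw [← mul_sub]
      have harg : Real.logb 2 (1/P i) - Real.logb 2 T.card
          = Real.log (1/(P i * T.card)) / Real.log 2 := by
        rw [Real.logb, Real.logb, div_sub_div_same]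
        congr 1
        rw [one_div, one_div, Real.log_inv, Real.log_inv,
          Real.log_mul (ne_of_gt hP) (ne_of_gt hN)]
        ring
      rw [harg]
      have hlb : Real.log (1/(P i * T.card)) ≤ 1/(P i * T.card) - 1 :=
        Real.log_le_sub_one_of_pos (by positivity)
      calc P i * (Real.log (1/(P i * T.card)) / Real.log 2)
          ≤ P i * ((1/(P i * T.card) - 1) / Real.log 2) := by
            apply mul_le_mul_of_nonneg_left _ hP.le
            exact div_le_div_of_nonneg_right hlb hlog2.le
        _ = (1/T.card - P i) / Real.log 2 := by field_simp
  have hsum : ∑ i ∈ T, ((1/(T.card:ℝ)) - P i) / Real.log 2 = 0 := by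
    rw [← Finset.sum_div, Finset.sum_sub_distrib, h1, Finset.sum_const]
    rw [nsmul_eq_mul, mul_one_div_cancel hN.ne', sub_self, zero_div]
  calc ∑ i ∈ T, P i * Real.logb 2 (1/P i)
      = (∑ i ∈ T, (P i * Real.logb 2 (1/P i) - P i * Real.logb 2 T.card))
        + Real.logb 2 T.card := by
        rw [Finset.sum_sub_distrib, ← Finset.sum_mul, h1]; ring
    _ ≤ 0 + Real.logb 2 T.card := by
        refine add_le_add ?_ le_rfl
        exact le_of_le_of_eq (Finset.sum_le_sum key) hsum
    _ = Real.logb 2 T.card := zero_add _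

lemma qmbcI_eq (s : ℕ) (ε : Fin (s+1) → ℝ) (p : Fin (2^s) → ℝ) :
    qmbcI s ε p = ∑ j : Fin (s+1), ε j *
      ∑ k ∈ Finset.range (2^(s-(j:ℕ))), Pb s (j:ℕ) p k * Real.logb 2 (1 / Pb s (j:ℕ) p k) := by
  have h2 : ∀ j : ℕ, 0 < 2^j := fun j => Nat.pow_pos (by norm_num)
  have hb : ∀ (j : ℕ) (x : Fin (2^s)), (x:ℕ)/2^j*2^j < 2^s :=
    fun j x => lt_of_le_of_lt (Nat.div_mul_le_self _ _) x.2
  simp only [qmbcI, Fintype.sum_prod_type]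
  rw [Finset.sum_comm]
  refine Finset.sum_congr rfl fun j _ => ?_
  by_cases hε : ε j = 0
  · simp [qmbcW, hε]
  -- Q value at the block representative
  have hQ : ∀ x : Fin (2^s),
      (∑ x' : Fin (2^s), p x' * qmbcW s ε x' (j, ⟨(x:ℕ)/2^(j:ℕ)*2^(j:ℕ), hb j x⟩))
        = ε j * Pb s (j:ℕ) p ((x:ℕ)/2^(j:ℕ)) := by
    intro x
    rw [Pb, Finset.mul_sum]
    refine Finset.sum_congr rfl fun x' _ => ?_
    simp only [qmbcW]
    have hiff : ((x:ℕ)/2^(j:ℕ)*2^(j:ℕ) = (x':ℕ)/2^(j:ℕ)*2^(j:ℕ)) ↔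
        ((x':ℕ)/2^(j:ℕ) = (x:ℕ)/2^(j:ℕ)) := by
      constructor
      · intro h; exact (Nat.eq_of_mul_eq_mul_right (h2 j) h.symm)
      · intro h; rw [h]
    rw [if_congr hiff rfl rfl]
    split <;> ring
  -- collapse the m-sum
  have hm : ∀ x : Fin (2^s),
      (∑ m : Fin (2^s), p x * qmbcW s ε x (j, m) *
        Real.logb 2 (qmbcW s ε x (j, m) / ∑ x', p x' * qmbcW s ε x' (j, m)))
      = p x * ε j * Real.logb 2 (1 / Pb s (j:ℕ) p ((x:ℕ)/2^(j:ℕ))) := by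
    intro x
    have hx : ∀ m : Fin (2^s),
        p x * qmbcW s ε x (j, m) *
          Real.logb 2 (qmbcW s ε x (j, m) / ∑ x', p x' * qmbcW s ε x' (j, m))
        = if m = (⟨(x:ℕ)/2^(j:ℕ)*2^(j:ℕ), hb j x⟩ : Fin (2^s)) then
            p x * ε j * Real.logb 2 (ε j / ∑ x', p x' * qmbcW s ε x' (j, m)) else 0 := by
      intro m
      by_cases hc : m = (⟨(x:ℕ)/2^(j:ℕ)*2^(j:ℕ), hb j x⟩ : Fin (2^s))
      · rw [if_pos hc]
        have : qmbcW s ε x (j, m) = ε j := by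
          rw [qmbcW, if_pos]; rw [hc]
        rw [this]
      · rw [if_neg hc]
        have : qmbcW s ε x (j, m) = 0 := by
          rw [qmbcW, if_neg]
          intro h
          exact hc (Fin.ext h)
        rw [this]; ring
    rw [Finset.sum_congr rfl fun m _ => hx m, Fintype.sum_ite_eq', hQ x,
      show ε j / (ε j * Pb s (j:ℕ) p ((x:ℕ)/2^(j:ℕ))) = 1 / Pb s (j:ℕ) p ((x:ℕ)/2^(j:ℕ)) by
        rw [← mul_div_mul_left 1 (Pb s (j:ℕ) p ((x:ℕ)/2^(j:ℕ))) hε, mul_one]]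
  rw [Finset.sum_congr rfl fun x _ => hm x]
  have hj : (j:ℕ) ≤ s := Nat.lt_succ_iff.mp j.2
  have := fiber_sum hj p (fun k => ε j * Real.logb 2 (1 / Pb s (j:ℕ) p k))
  simp only [← mul_assoc] at this
  rw [this, Finset.mul_sum]
  exact Finset.sum_congr rfl fun k _ => by ring

/-- The capacity of the QMBC with `q = 2^s` and partial-erasure probabilities
`ε_0,...,ε_s` is `1 − ∑_{j=1}^{s} j·ε_j/s`, measured in `q`-ary symbols per channel
use (i.e. mutual information in bits normalized by `s`), and it is achieved by the
uniform input distribution. -/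
theorem stmt14 {s : ℕ} (hs : 0 < s) (ε : Fin (s + 1) → ℝ)
    (hε0 : ∀ j, 0 ≤ ε j) (hε1 : ∑ j, ε j = 1) :
    IsGreatest
      {c : ℝ | ∃ p : Fin (2 ^ s) → ℝ,
        (∀ x, 0 ≤ p x) ∧ ∑ x, p x = 1 ∧ c = qmbcI s ε p / s}
      (1 - (∑ j : Fin (s + 1), (j : ℝ) * ε j) / s) ∧
    qmbcI s ε (fun _ => 1 / 2 ^ s) / s =
      1 - (∑ j : Fin (s + 1), (j : ℝ) * ε j) / s := by
  have hsR : (0:ℝ) < s := by exact_mod_cast hs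
  set A : ℝ := ∑ j : Fin (s + 1), (j : ℝ) * ε j with hA
  have hsplit : ∑ j : Fin (s+1), ε j * (((s - (j:ℕ) : ℕ)):ℝ) = (s:ℝ) - A := by
    have : ∀ j : Fin (s+1), ε j * (((s - (j:ℕ) : ℕ)):ℝ)
        = ε j * (s:ℝ) - (j:ℝ) * ε j := by
      intro j
      have hj : (j:ℕ) ≤ s := Nat.lt_succ_iff.mp j.2
      rw [Nat.cast_sub hj]
      ring
    rw [Finset.sum_congr rfl fun j _ => this j, Finset.sum_sub_distrib,
      ← Finset.sum_mul, hε1, one_mul, hA]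
  have hub : ∀ p : Fin (2^s) → ℝ, (∀ x, 0 ≤ p x) → ∑ x, p x = 1 →
      qmbcI s ε p ≤ (s:ℝ) - A := by
    intro p hp0 hp1
    rw [qmbcI_eq, ← hsplit]
    refine Finset.sum_le_sum fun j _ => ?_
    have hj : (j:ℕ) ≤ s := Nat.lt_succ_iff.mp j.2
    refine mul_le_mul_of_nonneg_left ?_ (hε0 j)
    have hent := entropy_le (Finset.range (2^(s-(j:ℕ)))) (Pb s (j:ℕ) p)
      (fun k _ => Pb_nonneg hp0 k) (by rw [Pb_sum hj, hp1])
    rw [Finset.card_range] at hent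
    refine le_trans hent (le_of_eq ?_)
    push_cast
    simp [Real.logb_pow]
  -- value for the uniform distribution
  have hPbu : ∀ (j:ℕ), j ≤ s → ∀ k ∈ Finset.range (2^(s-j)),
      Pb s j (fun _ => (1:ℝ)/2^s) k = 2^j/2^s := by
    intro j hj k hk
    rw [Pb, ← Finset.sum_filter, Finset.sum_const,
      fiber_card hj (Finset.mem_range.mp hk), nsmul_eq_mul]
    push_cast
    ring
  have huni : qmbcI s ε (fun _ => (1:ℝ)/2^s) = (s:ℝ) - A := by
    rw [qmbcI_eq, ← hsplit]
    refine Finset.sum_congr rfl fun j _ => ?_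
    have hj : (j:ℕ) ≤ s := Nat.lt_succ_iff.mp j.2
    congr 1
    rw [Finset.sum_congr rfl fun k hk => by
      rw [hPbu (j:ℕ) hj k hk]]
    rw [Finset.sum_const, Finset.card_range, nsmul_eq_mul]
    have h1 : (1:ℝ) / ((2:ℝ)^(j:ℕ)/2^s) = (2:ℝ)^(s-(j:ℕ)) := by
      rw [one_div_div, div_eq_iff (by positivity : ((2:ℝ)^(j:ℕ)) ≠ 0), ← pow_add]
      congr 1
      omega
    rw [h1]
    have h2 : ((2:ℝ)^(s-(j:ℕ)) : ℝ) * ((2:ℝ)^(j:ℕ)/2^s) = 1 := by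
      rw [← mul_div_assoc, ← pow_add]
      have h3 : s - (j:ℕ) + (j:ℕ) = s := by omega
      rw [h3, div_self (by positivity : ((2:ℝ)^s) ≠ 0)]
    rw [show Real.logb 2 ((2:ℝ)^(s-(j:ℕ))) = ((s-(j:ℕ):ℕ):ℝ) from by
      simp [Real.logb_pow]]
    push_cast
    rw [← mul_assoc, h2, one_mul]
  have hval : qmbcI s ε (fun _ => (1:ℝ)/2^s) / s = 1 - A / s := by
    rw [huni, sub_div, div_self hsR.ne']
  refine ⟨⟨⟨fun _ => (1:ℝ)/2^s, fun x => by positivity, ?_, hval.symm⟩, ?_⟩, hval⟩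
  · rw [Finset.sum_const, Finset.card_univ, Fintype.card_fin, nsmul_eq_mul]
    push_cast
    field_simp
  · rintro c ⟨p, hp0, hp1, rfl⟩
    have := hub p hp0 hp1
    have h2 : qmbcI s ε p / s ≤ ((s:ℝ) - A) / s :=
      div_le_div_of_nonneg_right this hsR.le
    calc qmbcI s ε p / s ≤ ((s:ℝ) - A) / s := h2
      _ = 1 - A / s := by rw [sub_div, div_self hsR.ne']
end
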